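/- arXiv:2101.10830 — 3 statements merged into one kernel-verified Lean document; each statement's English description precedes it below -/
import Mathlib

section
/- Let Γ be a finite directed acyclic graph on vertices {1,…,N} such that every edge goes from a larger vertex to a smaller vertex, and such that whenever there is an edge i → j and j < l < i, there is also an edge i → l. Let p_{ij} denote the number of directed paths from vertex i to vertex j (with p_{ii} = 1 and p_{ij} = 0 for i < j), and write p_i = p_{Ni}. Suppose the vertices connected to vertex 1 by an edge are exactly 2,…,k (with 2 ≤ k ≤ N). Then (p_2 + ⋯ + p_k)·(p_{k+1} + ⋯ + p_N + 1) ≥ p_2² + p_3² + ⋯ + p_N². -/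
/-- The number of directed paths from vertex `i` to vertex `j` in the directed
graph on natural numbers with edge relation `E` (all edges go from a larger
vertex to a smaller vertex); `pathCount E i i = 1`. -/
def pathCount (E : ℕ → ℕ → Bool) : ℕ → ℕ → ℕ
  | i, j =>
    if i = j then 1
    else ∑ l ∈ (Finset.range i).attach, if E i l.1 then pathCount E l.1 j else 0
termination_by i _ => i
decreasing_by exact Finset.mem_range.mp l.2

lemma pathCount_self (E : ℕ → ℕ → Bool) (i : ℕ) : pathCount E i i = 1 := by
  rw [pathCount]; simp

lemma pathCount_unfold (E : ℕ → ℕ → Bool) {i j : ℕ} (h : i ≠ j) :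
    pathCount E i j = ∑ l ∈ Finset.range i, if E i l then pathCount E l j else 0 := by
  rw [pathCount, if_neg h]
  exact Finset.sum_attach (Finset.range i) (fun l => if E i l then pathCount E l j else 0)

lemma pathCount_zero (E : ℕ → ℕ → Bool) : ∀ i j, i < j → pathCount E i j = 0 := by
  intro i
  induction i using Nat.strong_induction_on with
  | _ i IH =>
    intro j hij
    rw [pathCount_unfold E (Nat.ne_of_lt hij)]
    apply Finset.sum_eq_zero
    intro l hl
    rw [IH l (Finset.mem_range.mp hl) j (lt_trans (Finset.mem_range.mp hl) hij)]
    simp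

lemma ite_push {b : Bool} {α : Type*} (s : Finset α) (f : α → ℕ) :
    (if b then ∑ i ∈ s, f i else 0) = ∑ i ∈ s, if b then f i else 0 := by
  cases b <;> simp

lemma pathCount_lastStep (E : ℕ → ℕ → Bool) : ∀ m j, j < m →
    pathCount E m j = ∑ i ∈ Finset.Ioc j m, if E i j then pathCount E m i else 0 := by
  intro m
  induction m using Nat.strong_induction_on with
  | _ m IH =>
    intro j hj
    rw [pathCount_unfold E (show m ≠ j by omega)]
    have hsplit : (Finset.range m) = Finset.Ico 0 (j+1) ∪ Finset.Ico (j+1) m := by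
      rw [Finset.range_eq_Ico, Finset.Ico_union_Ico_eq_Ico (by omega) (by omega)]
    rw [hsplit, Finset.sum_union (by
      apply Finset.Ico_disjoint_Ico_consecutive)]
    have h1 : (∑ l ∈ Finset.Ico 0 (j+1), if E m l then pathCount E l j else 0)
        = if E m j then 1 else 0 := by
      rw [Finset.sum_eq_single_of_mem j (by simp)]
      · rw [pathCount_self]
      · intro l hl hlj
        simp only [Finset.mem_Ico] at hl
        rw [pathCount_zero E l j (by omega)]
        simp
    have h2 : (∑ l ∈ Finset.Ico (j+1) m, if E m l then pathCount E l j else 0)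
        = ∑ i ∈ Finset.Ico (j+1) m, if E i j then pathCount E m i else 0 := by
      have step1 : ∀ l ∈ Finset.Ico (j+1) m,
          (if E m l then pathCount E l j else 0)
            = ∑ i ∈ Finset.Ico (j+1) m,
                (if E m l then (if E i j then pathCount E l i else 0) else 0) := by
        intro l hl
        simp only [Finset.mem_Ico] at hl
        rw [IH l hl.2 j (by omega)]
        rw [Finset.sum_subset (show Finset.Ioc j l ⊆ Finset.Ico (j+1) m by
              intro x hx
              simp only [Finset.mem_Ioc] at hx
              simp only [Finset.mem_Ico]
              omega)
            (by
              intro x hx hxn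
              simp only [Finset.mem_Ico] at hx
              simp only [Finset.mem_Ioc] at hxn
              rw [pathCount_zero E l x (by omega)]
              simp)]
        exact ite_push _ _
      rw [Finset.sum_congr rfl step1, Finset.sum_comm]
      apply Finset.sum_congr rfl
      intro i hi
      simp only [Finset.mem_Ico] at hi
      have flip : ∀ l, (if E m l then (if E i j then pathCount E l i else 0) else 0)
          = (if E i j then (if E m l then pathCount E l i else 0) else 0) := by
        intro l
        by_cases h : E m l <;> by_cases h' : E i j <;> simp [h, h']
      simp_rw [flip]
      rw [← ite_push]
      by_cases hEij : E i j
      · simp only [hEij, if_true]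
        rw [pathCount_unfold E (show m ≠ i by omega)]
        apply Finset.sum_subset (show Finset.Ico (j+1) m ⊆ Finset.range m by
          intro x hx; simp only [Finset.mem_Ico] at hx; simp only [Finset.mem_range]; omega)
        intro x hx hxn
        simp only [Finset.mem_range] at hx
        simp only [Finset.mem_Ico] at hxn
        rw [pathCount_zero E x i (by omega)]
        simp
      · simp [hEij]
    rw [h1, h2]
    have hins : Finset.Ioc j m = insert m (Finset.Ico (j+1) m) := by
      rw [Finset.Ico_add_one_left_eq_Ioo, Finset.Ioo_insert_right hj]
    rw [hins, Finset.sum_insert (by simp), pathCount_self]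

/-- Proposition 5.2: for a resolution graph `Γ` on vertices `1,…,N` (edges from
larger to smaller, interval property, at most two outgoing arrows from each
vertex one of which goes to the immediate predecessor), if the vertices sending
an arrow to vertex `1` are exactly `2,…,k`, then
`(p_2+⋯+p_k)·(p_{k+1}+⋯+p_N+1) ≥ p_2²+⋯+p_N²`, where `p_i` is the number of
directed paths from `N` to `i`. -/
theorem proposition_5_2 (N k : ℕ) (E : ℕ → ℕ → Bool)
    (hN : 2 ≤ N) (hk2 : 2 ≤ k) (hkN : k ≤ N)
    (hE : ∀ i j, E i j = true → 1 ≤ j ∧ j < i ∧ i ≤ N)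
    (hInt : ∀ i j l, E i j = true → j < l → l < i → E i l = true)
    (hOut : ∀ i, 2 ≤ i → i ≤ N →
      ((Finset.range i).filter (fun j => E i j = true)).card ≤ 2 ∧ E i (i - 1) = true)
    (hTo1 : ∀ i, E i 1 = true ↔ (2 ≤ i ∧ i ≤ k)) :
    (∑ i ∈ Finset.Icc 2 N, (pathCount E N i) ^ 2) ≤
      (∑ i ∈ Finset.Icc 2 k, pathCount E N i) *
        ((∑ i ∈ Finset.Icc (k + 1) N, pathCount E N i) + 1) := by
  -- every edge i → j has j ≥ i - 2
  have edgeF : ∀ i j, E i j = true → i ≤ j + 2 := by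
    intro i j hij
    by_contra hcon
    push_neg at hcon
    obtain ⟨h1, h2, h3⟩ := hE i j hij
    have e1 : E i (j+1) = true := hInt i j (j+1) hij (by omega) (by omega)
    have e2 : E i (j+2) = true := hInt i j (j+2) hij (by omega) (by omega)
    have hcard := (hOut i (by omega) h3).1
    have hsub : ({j, j+1, j+2} : Finset ℕ) ⊆
        (Finset.range i).filter (fun l => E i l = true) := by
      intro x hx
      simp only [Finset.mem_insert, Finset.mem_singleton] at hx
      simp only [Finset.mem_filter, Finset.mem_range]
      rcases hx with rfl | rfl | rfl
      · exact ⟨by omega, hij⟩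
      · exact ⟨by omega, e1⟩
      · exact ⟨by omega, e2⟩
    have hc3 : ({j, j+1, j+2} : Finset ℕ).card = 3 := by
      rw [Finset.card_insert_of_notMem (by simp), Finset.card_insert_of_notMem (by simp)]
      simp
    have := Finset.card_le_card hsub
    omega
  have hk3 : k ≤ 3 := by
    by_contra hcon
    have := edgeF k 1 ((hTo1 k).mpr ⟨hk2, le_refl k⟩)
    omega
  have pN : pathCount E N N = 1 := pathCount_self E N
  have pgt : ∀ j, N < j → pathCount E N j = 0 := fun j h => pathCount_zero E N j h
  -- the last-step recursion specialized to the chain structure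
  have recn : ∀ j, 2 ≤ j → j + 1 ≤ N → pathCount E N j
      = pathCount E N (j+1) + (if E (j+2) j then pathCount E N (j+2) else 0) := by
    intro j h2 hN1
    have hstep := pathCount_lastStep E N j (by omega)
    have e1 : E (j+1) j = true := by
      have := (hOut (j+1) (by omega) (by omega)).2
      simpa using this
    by_cases hj2 : j + 2 ≤ N
    · rw [hstep, ← Finset.sum_subset
        (show ({j+1, j+2} : Finset ℕ) ⊆ Finset.Ioc j N by
          intro x hx
          simp only [Finset.mem_insert, Finset.mem_singleton] at hx
          simp only [Finset.mem_Ioc]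
          rcases hx with rfl | rfl <;> omega)
        (by
          intro x hx hxn
          simp only [Finset.mem_Ioc] at hx
          simp only [Finset.mem_insert, Finset.mem_singleton] at hxn
          have hne : ¬ (E x j = true) := fun h => by have := edgeF x j h; omega
          simp [hne])]
      rw [Finset.sum_pair (by omega), if_pos e1]
    · rw [hstep, ← Finset.sum_subset
        (show ({j+1} : Finset ℕ) ⊆ Finset.Ioc j N by
          intro x hx
          simp only [Finset.mem_singleton] at hx
          simp only [Finset.mem_Ioc]
          omega)
        (by
          intro x hx hxn
          simp only [Finset.mem_Ioc] at hx
          simp only [Finset.mem_singleton] at hxn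
          have hne : ¬ (E x j = true) := fun h => by have := edgeF x j h; omega
          simp [hne])]
      rw [Finset.sum_singleton, if_pos e1, pgt (j+2) (by omega)]
      simp
  have Tsplit : ∀ a, a ≤ N → (∑ i ∈ Finset.Icc a N, pathCount E N i)
      = pathCount E N a + ∑ i ∈ Finset.Icc (a+1) N, pathCount E N i := by
    intro a ha
    rw [Finset.Icc_add_one_left_eq_Ioc, Finset.Icc_eq_cons_Ioc ha, Finset.sum_cons]
  have Qsplit : ∀ a, a ≤ N → (∑ i ∈ Finset.Icc a N, pathCount E N i ^ 2)
      = pathCount E N a ^ 2 + ∑ i ∈ Finset.Icc (a+1) N, pathCount E N i ^ 2 := by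
    intro a ha
    rw [Finset.Icc_add_one_left_eq_Ioc, Finset.Icc_eq_cons_Ioc ha, Finset.sum_cons]
  have TN1 : (∑ i ∈ Finset.Icc (N+1) N, pathCount E N i) = 0 := by
    rw [Finset.Icc_eq_empty (by omega)]
    simp
  -- Claim B
  have claimB : ∀ d j, j + d = N → 2 ≤ j →
      pathCount E N j ≤ (∑ i ∈ Finset.Icc (j+2) N, pathCount E N i) + 1 := by
    intro d
    induction d with
    | zero =>
      intro j hj h2
      have : j = N := by omega
      subst this
      rw [pN]
      omega
    | succ d IHd =>
      intro j hj h2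
      have hrec := recn j h2 (by omega)
      have hc : (if E (j+2) j then pathCount E N (j+2) else 0) ≤ pathCount E N (j+2) := by
        split <;> simp
      have hIH := IHd (j+1) (by omega) (by omega)
      rw [show j + 1 + 2 = j + 2 + 1 by omega] at hIH
      by_cases hj2 : j + 2 ≤ N
      · have hT := Tsplit (j+2) hj2
        omega
      · have h0 : pathCount E N (j+2) = 0 := pgt _ (by omega)
        have hp1 : pathCount E N (j+1) = 1 := by
          rw [show j + 1 = N by omega]; exact pN
        have hT2 : (∑ i ∈ Finset.Icc (j+2) N, pathCount E N i) = 0 := by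
          rw [show j + 2 = N + 1 by omega]; exact TN1
        omega
  have cB : ∀ j, 2 ≤ j → j ≤ N →
      pathCount E N j ≤ (∑ i ∈ Finset.Icc (j+2) N, pathCount E N i) + 1 :=
    fun j h2 hN' => claimB (N - j) j (by omega) h2
  -- Claim A
  have claimA : ∀ d j, j + d = N → 2 ≤ j →
      (∑ i ∈ Finset.Icc j N, pathCount E N i ^ 2)
        ≤ pathCount E N j * ((∑ i ∈ Finset.Icc (j+1) N, pathCount E N i) + 1) := by
    intro d
    induction d with
    | zero =>
      intro j hj h2
      have : j = N := by omega
      subst this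
      rw [Finset.Icc_self, Finset.sum_singleton, pN, TN1]
      norm_num
    | succ d IHd =>
      intro j hj h2
      have hrec := recn j h2 (by omega)
      set c := (if E (j+2) j then pathCount E N (j+2) else 0) with hcdef
      have hIH := IHd (j+1) (by omega) (by omega)
      have hB := cB j h2 (by omega)
      have hQs := Qsplit j (by omega)
      have hTs := Tsplit (j+1) (by omega)
      rw [show j + 1 + 1 = j + 2 by omega] at hIH hTs
      set A := pathCount E N j
      set B := pathCount E N (j+1)
      set T2 := ∑ i ∈ Finset.Icc (j+2) N, pathCount E N i
      set Q1 := ∑ i ∈ Finset.Icc (j+1) N, pathCount E N i ^ 2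
      rw [hQs, hTs]
      have e2 : A * A = A * B + A * c := by rw [hrec]; ring
      have e3 : T2 * A = T2 * B + T2 * c := by rw [hrec]; ring
      have key : A * c ≤ (T2 + 1) * c := Nat.mul_le_mul_right c hB
      nlinarith [e2, e3, key, hIH, hrec]
  interval_cases k
  · -- k = 2
    rw [Finset.Icc_self, Finset.sum_singleton]
    exact claimA (N - 2) 2 (by omega) (by norm_num)
  · -- k = 3
    have h3N : 3 ≤ N := hkN
    have hA := claimA (N - 2) 2 (by omega) (by norm_num)
    have hB2 := cB 2 (by norm_num) (by omega)
    have hTs := Tsplit 3 h3N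
    have hsum23 : (∑ i ∈ Finset.Icc 2 3, pathCount E N i)
        = pathCount E N 2 + pathCount E N 3 := by
      rw [show (3:ℕ) = 2 + 1 from rfl, Finset.sum_Icc_succ_top (by omega), Finset.Icc_self,
        Finset.sum_singleton]
    rw [hsum23]
    have key : pathCount E N 2 * pathCount E N 3
        ≤ ((∑ i ∈ Finset.Icc 4 N, pathCount E N i) + 1) * pathCount E N 3 :=
      Nat.mul_le_mul_right _ hB2
    nlinarith [hA, hTs, key]
end

section
/- Let Q(m) be the space of quadratic forms in m variables over ℂ, and for integers e ≥ 1 and a ≥ 0 let X_{e,a} ⊆ Q(m)^e be the set of tuples (h_1,…,h_e) with rk(h_1,…,h_e) ≤ a, where rk of a tuple is the minimal rank of a nonzero linear combination. Then codim(X_{e,a} ⊆ Q(m)^e) ≥ codim(R_{≤a} ⊆ Q(m)) − e + 1 = (m−a)(m−a−1)/2 − e + 1. -/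
open MvPolynomial

section Nest

variable {B : Type*} [CommRing B]

/-- The Coquand–Lombardi nested expression. -/
def nestCL (x : ℕ → B) (mm : ℕ → ℕ) (aa : ℕ → B) : ℕ → B
  | 0 => 1
  | (k+1) => x 0 ^ mm 0 *
      (nestCL (fun i => x (i+1)) (fun i => mm (i+1)) (fun i => aa (i+1)) k + aa 0 * x 0)

/-- Lemma 1: a "pseudo-regular" sequence coming from a chain of primes has no
singular relation. -/
lemma nestCL_not_mem (k : ℕ) (p : ℕ → Ideal B) (x : ℕ → B) (mm : ℕ → ℕ) (aa : ℕ → B)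
    (hp : ∀ i, (p i).IsPrime)
    (hmono : ∀ i, i < k → p i ≤ p (i + 1))
    (hx1 : ∀ i, i < k → x i ∈ p (i + 1))
    (hx2 : ∀ i, i < k → x i ∉ p i) :
    nestCL x mm aa k ∉ p 0 := by
  induction k generalizing p x mm aa with
  | zero =>
      intro h
      exact (hp 0).ne_top (Ideal.eq_top_iff_one _ |>.2 (by simpa [nestCL] using h))
  | succ k ih =>
      intro hmem
      rw [nestCL] at hmem
      have hx0 : x 0 ∉ p 0 := hx2 0 (Nat.succ_pos _)
      have h1 : (nestCL (fun i => x (i+1)) (fun i => mm (i+1)) (fun i => aa (i+1)) k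
          + aa 0 * x 0) ∈ p 0 := by
        rcases (hp 0).mem_or_mem hmem with h | h
        · exact absurd ((hp 0).mem_of_pow_mem _ h) hx0
        · exact h
      have h2 : nestCL (fun i => x (i+1)) (fun i => mm (i+1)) (fun i => aa (i+1)) k
          ∈ p 1 := by
        have hbig := hmono 0 (Nat.succ_pos _) h1
        have : aa 0 * x 0 ∈ p 1 := Ideal.mul_mem_left _ _ (hx1 0 (Nat.succ_pos _))
        simpa using Ideal.sub_mem _ hbig this
      exact ih (fun i => p (i+1)) (fun i => x (i+1)) (fun i => mm (i+1)) (fun i => aa (i+1))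
        (fun i => hp (i+1)) (fun i hi => hmono (i+1) (by omega))
        (fun i hi => hx1 (i+1) (by omega)) (fun i hi => hx2 (i+1) (by omega)) h2

variable {F : Type*} [Field F] [Algebra F B]

/-- Lemma 2: an algebraic relation yields a singular (nested) relation. -/
lemma exists_nestCL_eq (k : ℕ) (x : ℕ → B) (Q : MvPolynomial (Fin k) F) (hQ : Q ≠ 0) :
    ∃ (mm : ℕ → ℕ) (aa : ℕ → B) (c : F),
      nestCL x mm aa k = c • (aeval (fun i : Fin k => x i) Q) := by
  induction k generalizing x with
  | zero =>
      refine ⟨fun _ => 0, fun _ => 0, (constantCoeff Q)⁻¹, ?_⟩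
      have hQC : Q = C (constantCoeff Q) := eq_C_of_isEmpty Q
      have hc : constantCoeff Q ≠ 0 := fun h => hQ (by rw [hQC, h, map_zero])
      have hA : (aeval (fun i : Fin 0 => x i)) Q = algebraMap F B (constantCoeff Q) := by
        conv_lhs => rw [hQC]
        exact aeval_C _ _
      rw [hA, Algebra.algebraMap_eq_smul_one, smul_smul, inv_mul_cancel₀ hc, one_smul]
      rfl
  | succ k ih =>
      set P' : Polynomial (MvPolynomial (Fin k) F) := MvPolynomial.finSuccEquiv F k Q with hP'
      have hP'0 : P' ≠ 0 := by
        simp only [hP', ne_eq, EmbeddingLike.map_eq_zero_iff]; exact hQ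
      set m0 := P'.natTrailingDegree with hm0
      have hdvd : Polynomial.X ^ m0 ∣ P' := by
        rw [Polynomial.X_pow_dvd_iff]
        exact fun d hd => Polynomial.coeff_eq_zero_of_lt_natTrailingDegree hd
      obtain ⟨P2, hP2⟩ := hdvd
      have hc0 : P2.coeff 0 ≠ 0 := by
        have h1 : P'.coeff m0 = P2.coeff 0 := by
          rw [hP2]
          simpa using Polynomial.coeff_X_pow_mul P2 m0 0
        have ht : P'.trailingCoeff ≠ 0 := by
          rw [ne_eq, Polynomial.trailingCoeff_eq_zero]; exact hP'0
        rw [Polynomial.trailingCoeff, ← hm0, h1] at ht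
        exact ht
      -- the evaluation homomorphism
      set ψ : Polynomial (MvPolynomial (Fin k) F) →ₐ[F] B :=
        Polynomial.aevalTower (MvPolynomial.aeval (fun i : Fin k => x (i+1))) (x 0) with hψ
      have hψQ : ∀ R : MvPolynomial (Fin (k+1)) F,
          ψ ((MvPolynomial.finSuccEquiv F k) R) = aeval (fun i : Fin (k+1) => x i) R := by
        intro R
        have : ψ.comp (MvPolynomial.finSuccEquiv F k).toAlgHom
            = aeval (fun i : Fin (k+1) => x i) := by
          apply MvPolynomial.algHom_ext
          intro i
          refine Fin.cases ?_ ?_ i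
          · simp [ψ, MvPolynomial.finSuccEquiv_X_zero]
          · intro j
            simp [ψ, MvPolynomial.finSuccEquiv_X_succ]
        exact congrFun (congrArg DFunLike.coe this) R
      obtain ⟨mm', aa', c1, hIH⟩ := ih (fun i => x (i+1)) (P2.coeff 0) hc0
      refine ⟨fun n => Nat.casesOn n m0 mm',
        fun n => Nat.casesOn n (c1 • ψ P2.divX) aa', c1, ?_⟩
      have h1 : ψ Polynomial.X = x 0 := by simp [ψ]
      have h2 : ψ (Polynomial.C (P2.coeff 0)) = aeval (fun i : Fin k => x (i+1)) (P2.coeff 0) := by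
        simp [ψ]
      have hQval : aeval (fun i : Fin (k+1) => x i) Q
          = x 0 ^ m0 * (x 0 * ψ P2.divX
            + aeval (fun i : Fin k => x (i+1)) (P2.coeff 0)) := by
        rw [← hψQ Q, ← hP', hP2]
        conv_lhs => rw [(Polynomial.X_mul_divX_add P2).symm]
        rw [map_mul, map_pow, map_add, map_mul, h1, h2]
      rw [hQval, nestCL]
      show x 0 ^ m0 * (nestCL (fun i => x (i+1)) mm' aa' k
          + (c1 • ψ P2.divX) * x 0) = _
      rw [hIH, smul_mul_assoc, ← smul_add, mul_smul_comm]
      congr 1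
      ring

end Nest

section Counting

variable {F : Type*} [Field F]

lemma exponent_le_totalDegree {τ : Type*} (p : MvPolynomial τ F) {γ : τ →₀ ℕ}
    (hγ : γ ∈ p.support) (i : τ) : γ i ≤ p.totalDegree := by
  refine le_trans ?_ (MvPolynomial.le_totalDegree hγ)
  by_cases h : i ∈ γ.support
  · exact Finset.single_le_sum (f := fun j => γ j) (fun _ _ => Nat.zero_le _) h
  · simp [Finsupp.notMem_support_iff.1 h]

/-- Lemma 3: more elements than variables are algebraically dependent. -/
lemma exists_annihilating_poly {τ ι : Type*} [Fintype τ] [Fintype ι] [DecidableEq τ] [DecidableEq ι]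
    (x : ι → MvPolynomial τ F) (hcard : Fintype.card τ < Fintype.card ι) :
    ∃ Q : MvPolynomial ι F, Q ≠ 0 ∧ aeval x Q = 0 := by
  classical
  set n1 := Fintype.card ι with hn1
  set d := max 1 (Finset.univ.sup fun i => (x i).totalDegree) with hd
  have hd1 : 1 ≤ d := le_max_left _ _
  have hdeg : ∀ i, (x i).totalDegree ≤ d := by
    intro i
    rw [hd]
    exact le_trans (Finset.le_sup (f := fun i => (x i).totalDegree) (Finset.mem_univ i))
      (le_max_right _ _)
  set K := (n1 * d + 1) ^ Fintype.card τ with hK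
  have hK1 : 1 ≤ K := Nat.one_le_pow _ _ (by positivity)
  set NN := n1 * K * d with hNN
  -- the two families
  set v : (ι → Fin (K+1)) → MvPolynomial τ F := fun α => ∏ i, x i ^ (α i : ℕ) with hv
  set w : (τ → Fin (NN+1)) → MvPolynomial τ F :=
    fun β => monomial (Finsupp.equivFunOnFinite.symm fun i => (β i : ℕ)) 1 with hw
  -- each v α lies in the span of the w's
  have hvmem : ∀ α, v α ∈ Submodule.span F (Set.range w) := by
    intro α
    have hdegα : (v α).totalDegree ≤ NN := by
      refine le_trans (MvPolynomial.totalDegree_finset_prod _ _) ?_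
      have hstep : ∀ i ∈ Finset.univ, ((x i) ^ (α i : ℕ)).totalDegree ≤ K * d := by
        intro i _
        refine le_trans (MvPolynomial.totalDegree_pow _ _) ?_
        have hKA : (α i : ℕ) ≤ K := Nat.lt_succ_iff.1 (α i).isLt
        exact Nat.mul_le_mul hKA (hdeg i)
      refine le_trans (Finset.sum_le_sum hstep) ?_
      rw [Finset.sum_const, Finset.card_univ, smul_eq_mul, hNN, ← hn1]
      exact le_of_eq (by ring)
    -- write v α as a combination of its monomials
    rw [← MvPolynomial.support_sum_monomial_coeff (v α)]
    refine Submodule.sum_mem _ fun γ hγ => ?_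
    have hmono : (monomial γ) (coeff γ (v α)) = (coeff γ (v α)) • (monomial γ (1 : F)) := by
      rw [MvPolynomial.smul_monomial, smul_eq_mul, mul_one]
    rw [hmono]
    refine Submodule.smul_mem _ _ (Submodule.subset_span ?_)
    refine ⟨fun i => ⟨γ i, ?_⟩, ?_⟩
    · exact Nat.lt_succ_of_le (le_trans (exponent_le_totalDegree _ hγ i) hdegα)
    · simp only [hw]
      congr 1
      ext i
      simp
  -- linear dependence by cardinality
  have hnotli : ¬ LinearIndependent F v := by
    intro hli
    have hfin : (Set.range w).Finite := Set.finite_range w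
    have : FiniteDimensional F (Submodule.span F (Set.range w)) := by
      exact FiniteDimensional.span_of_finite F hfin
    set v' : (ι → Fin (K+1)) → (Submodule.span F (Set.range w)) :=
      fun α => ⟨v α, hvmem α⟩ with hv'
    have hli' : LinearIndependent F v' := by
      have : v = (Submodule.span F (Set.range w)).subtype ∘ v' := rfl
      rw [this] at hli
      exact LinearIndependent.of_comp _ hli
    have hc1 : Fintype.card (ι → Fin (K+1)) ≤
        Module.finrank F (Submodule.span F (Set.range w)) :=
      hli'.fintype_card_le_finrank
    have hc2 : Module.finrank F (Submodule.span F (Set.range w))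
        ≤ Fintype.card (τ → Fin (NN+1)) := by
      haveI : Fintype (Set.range w) := Set.fintypeRange w
      refine le_trans (finrank_span_le_card _) ?_
      rw [Set.toFinset_card]
      exact Fintype.card_range_le w
    -- numeric contradiction
    simp only [Fintype.card_fun, Fintype.card_fin] at hc1 hc2
    have hnum : (NN + 1) ^ Fintype.card τ < (K + 1) ^ Fintype.card ι := by
      have h1 : NN + 1 ≤ (n1 * d + 1) * K := by
        have : n1 * K * d + 1 ≤ n1 * d * K + K := by
          have h2 : n1 * K * d = n1 * d * K := by ring
          omega
        calc NN + 1 = n1 * K * d + 1 := rfl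
        _ ≤ n1 * d * K + K := this
        _ = (n1 * d + 1) * K := by ring
      calc (NN + 1) ^ Fintype.card τ ≤ ((n1 * d + 1) * K) ^ Fintype.card τ :=
            Nat.pow_le_pow_left h1 _
        _ = (n1 * d + 1) ^ Fintype.card τ * K ^ Fintype.card τ := by rw [mul_pow]
        _ = K * K ^ Fintype.card τ := by rw [hK]
        _ ≤ K * (K+1) ^ Fintype.card τ :=
            Nat.mul_le_mul_left _ (Nat.pow_le_pow_left (Nat.le_succ _) _)
        _ < (K+1) * (K+1) ^ Fintype.card τ := by
            have : 0 < (K+1) ^ Fintype.card τ := Nat.pow_pos (by omega)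
            exact (Nat.mul_lt_mul_right this).2 (Nat.lt_succ_self K)
        _ = (K+1) ^ (Fintype.card τ + 1) := by ring
        _ ≤ (K+1) ^ Fintype.card ι := Nat.pow_le_pow_right (by omega) (by omega)
    omega
  -- extract the annihilating polynomial
  rw [Fintype.not_linearIndependent_iff] at hnotli
  obtain ⟨g, hgsum, α0, hα0⟩ := hnotli
  set expof : (ι → Fin (K+1)) → (ι →₀ ℕ) :=
    fun α => Finsupp.equivFunOnFinite.symm (fun i => (α i : ℕ)) with hexpof
  have hexpinj : Function.Injective expof := by
    intro α β h
    funext i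
    have h2 : ((α i : ℕ)) = (β i : ℕ) := by
      have h3 := congrArg (fun f : ι →₀ ℕ => f i) h
      simpa [hexpof] using h3
    exact Fin.val_injective h2
  refine ⟨∑ α, monomial (expof α) (g α), ?_, ?_⟩
  · intro h
    apply hα0
    have := congrArg (coeff (expof α0)) h
    rw [MvPolynomial.coeff_sum] at this
    simp only [MvPolynomial.coeff_monomial, coeff_zero] at this
    rw [Finset.sum_eq_single α0] at this
    · simpa using this
    · intro β _ hβ
      rw [if_neg (fun hh => hβ (hexpinj hh))]
    · simp
  · rw [map_sum, ← hgsum]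
    refine Finset.sum_congr rfl fun α _ => ?_
    rw [MvPolynomial.aeval_monomial, Finsupp.prod_fintype _ _ (fun i => pow_zero (x i))]
    simp only [hexpof, Finsupp.equivFunOnFinite_symm_apply_apply]
    rw [Algebra.smul_def]

end Counting
open Order in
/-- The Krull dimension of a quotient of a polynomial ring by an intersection of
kernels of maps to polynomial rings in `n` variables is at most `n`. -/
lemma ringKrullDim_quot_inf_ker_le {σ τ J : Type*} [Fintype τ] [Fintype J]
    (g : J → σ → MvPolynomial τ ℂ) :
    ringKrullDim (MvPolynomial σ ℂ ⧸
        (⨅ j, RingHom.ker (MvPolynomial.aeval (R := ℂ) (g j)).toRingHom))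
      ≤ (Fintype.card τ : WithBot ℕ∞) := by
  classical
  set P := MvPolynomial σ ℂ
  set I : Ideal P := ⨅ j, RingHom.ker (MvPolynomial.aeval (R := ℂ) (g j)).toRingHom with hI
  set n := Fintype.card τ with hn
  show krullDim (PrimeSpectrum (P ⧸ I)) ≤ _
  rw [krullDim]
  refine iSup_le fun l => ?_
  have hlen : l.length ≤ n := by
    by_contra hcon
    push_neg at hcon
    have hL : n + 1 ≤ l.length := hcon
    -- chain of primes in P
    set q : ℕ → Ideal P := fun i =>
      Ideal.comap (Ideal.Quotient.mk I) (l ⟨min i l.length, by omega⟩).asIdeal with hq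
    have hqprime : ∀ i, (q i).IsPrime := fun i => Ideal.IsPrime.comap _
    have hmono : ∀ i, q i ≤ q (i + 1) := by
      intro i
      refine Ideal.comap_mono ((PrimeSpectrum.asIdeal_le_asIdeal _ _).2 <|
        l.monotone ?_)
      simp only [Fin.le_def]
      omega
    have hstrict : ∀ i, i < n + 1 → q i < q (i + 1) := by
      intro i hi
      have h1 : (⟨min i l.length, by omega⟩ : Fin (l.length + 1))
          < ⟨min (i+1) l.length, by omega⟩ := by
        simp only [Fin.lt_def]
        omega
      have h2 := l.strictMono h1
      refine lt_of_le_of_ne (hmono i) fun heq => ?_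
      have := Ideal.comap_injective_of_surjective (Ideal.Quotient.mk I)
        Ideal.Quotient.mk_surjective heq
      exact ne_of_lt h2 (PrimeSpectrum.ext this)
    have hex : ∀ i, i < n + 1 → ∃ y : P, y ∈ q (i + 1) ∧ y ∉ q i := by
      intro i hi
      obtain ⟨y, hy1, hy2⟩ := SetLike.exists_of_lt (hstrict i hi)
      exact ⟨y, hy1, hy2⟩
    set x : ℕ → P := fun i => if h : i < n + 1 then (hex i h).choose else 1 with hx
    have hx1 : ∀ i, i < n + 1 → x i ∈ q (i + 1) := by
      intro i hi
      simp only [hx, dif_pos hi]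
      exact (hex i hi).choose_spec.1
    have hx2 : ∀ i, i < n + 1 → x i ∉ q i := by
      intro i hi
      simp only [hx, dif_pos hi]
      exact (hex i hi).choose_spec.2
    -- the ideal I is contained in q 0
    have hIq0 : I ≤ q 0 := by
      refine le_trans (le_of_eq (Ideal.mk_ker (I := I)).symm) ?_
      exact le_trans (le_of_eq rfl) (Ideal.comap_mono bot_le)
    -- find the component j
    have hinf : (Finset.univ.inf fun j => RingHom.ker
        (MvPolynomial.aeval (R := ℂ) (g j)).toRingHom) ≤ q 0 := by
      refine le_trans ?_ hIq0
      rw [hI]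
      exact le_iInf fun b => Finset.inf_le (Finset.mem_univ b)
    obtain ⟨j, -, hj⟩ := (Ideal.IsPrime.inf_le' (hqprime 0)).1 hinf
    -- algebraic dependence of the images
    obtain ⟨Q, hQ0, hQval⟩ := exists_annihilating_poly
      (fun i : Fin (n + 1) => MvPolynomial.aeval (g j) (x i))
      (by simp [hn])
    have hker : MvPolynomial.aeval (fun i : Fin (n + 1) => x i) Q ∈ q 0 := by
      apply hj
      rw [RingHom.mem_ker]
      have hcomp := MvPolynomial.comp_aeval (fun i : Fin (n + 1) => x i)
        (MvPolynomial.aeval (R := ℂ) (g j))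
      have := congrFun (congrArg DFunLike.coe hcomp) Q
      simp only [AlgHom.coe_comp, Function.comp_apply] at this
      rw [show (MvPolynomial.aeval (R := ℂ) (g j)).toRingHom
        (MvPolynomial.aeval (fun i : Fin (n + 1) => x i) Q)
        = (MvPolynomial.aeval (R := ℂ) (g j))
        (MvPolynomial.aeval (fun i : Fin (n + 1) => x i) Q) from rfl, this, hQval]
    obtain ⟨mm, aa, c, hnest⟩ := exists_nestCL_eq (n + 1) x Q hQ0
    have hmem : nestCL x mm aa (n + 1) ∈ q 0 := by
      rw [hnest, Algebra.smul_def]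
      exact Ideal.mul_mem_left _ _ hker
    exact nestCL_not_mem (n + 1) q x mm aa hqprime (fun i _ => hmono i) hx1 hx2 hmem
  exact_mod_cast hlen

open MvPolynomial

section LinAlg

variable {m a : ℕ}

/-- From a rank bound, select `a` rows spanning the row space. -/
lemma rows_span_exists (M : Matrix (Fin m) (Fin m) ℂ) (hrank : M.rank ≤ a) (ham : a ≤ m) :
    ∃ S : Finset (Fin m), S.card = a ∧
      ∀ i, (M i) ∈ Submodule.span ℂ (M '' ↑S) := by
  classical
  have hfr : Module.finrank ℂ (Submodule.span ℂ (Set.range M)) ≤ a := by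
    have h1 : (Matrix.transpose M).rank =
        Module.finrank ℂ (Submodule.span ℂ (Set.range M)) := by
      rw [Matrix.rank_eq_finrank_span_cols]; rfl
    rw [← h1, Matrix.rank_transpose]
    exact hrank
  obtain ⟨b, hb, hspan, hli⟩ := exists_linearIndependent ℂ (Set.range M)
  have hbfin : b.Finite := Set.Finite.subset (Set.finite_range M) hb
  haveI : Fintype b := hbfin.fintype
  have hbcard : b.toFinset.card ≤ a := by
    rw [← finrank_span_set_eq_card hli, hspan]
    exact hfr
  -- pick indices
  set T : Finset (Fin m) := b.toFinset.attach.image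
    (fun y => (Set.mem_range.1 (hb (Set.mem_toFinset.1 y.2))).choose) with hT
  have hTcard : T.card ≤ a := le_trans (Finset.card_image_le)
    (le_trans (by rw [Finset.card_attach]) hbcard)
  have hTspan : ∀ y ∈ b, y ∈ M '' ↑T := by
    intro y hy
    have hy' : y ∈ b.toFinset := Set.mem_toFinset.2 hy
    refine ⟨(Set.mem_range.1 (hb hy)).choose, ?_, (Set.mem_range.1 (hb hy)).choose_spec⟩
    have : (⟨y, hy'⟩ : {z // z ∈ b.toFinset}) ∈ b.toFinset.attach := Finset.mem_attach _ _
    exact Finset.mem_coe.2 (Finset.mem_image.2 ⟨⟨y, hy'⟩, this, rfl⟩)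
  obtain ⟨S, hTS, hScard⟩ := Finset.exists_superset_card_eq hTcard
    (by simpa using ham)
  refine ⟨S, hScard, fun i => ?_⟩
  have h1 : M i ∈ Submodule.span ℂ b := by
    rw [hspan]
    exact Submodule.subset_span (Set.mem_range_self i)
  have h2 : Submodule.span ℂ b ≤ Submodule.span ℂ (M '' ↑S) := by
    refine Submodule.span_le.2 fun y hy => ?_
    have := hTspan y hy
    exact Submodule.subset_span (Set.image_mono (by exact_mod_cast hTS) this)
  exact h2 h1

/-- The key identity for the parametrization of low-rank symmetric matrices. -/
lemma KE_identity (M : Matrix (Fin m) (Fin m) ℂ) (hsym : ∀ i j, M i j = M j i)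
    (ρ : Fin a → Fin m) (ρc : Fin (m - a) → Fin m)
    (hρ : Function.Injective ρ) (hρc : Function.Injective ρc)
    (hdisj : ∀ u v, ρ u ≠ ρc v)
    (hcover : ∀ i, (∃ u, ρ u = i) ∨ (∃ v, ρc v = i))
    (κ : Fin (m - a) → Fin a → ℂ)
    (hκ : ∀ v j, M (ρc v) j = ∑ u, κ v u * M (ρ u) j)
    (KE : Fin a → Fin m → ℂ)
    (hKE : ∀ u i, KE u i =
      (if ρ u = i then 1 else 0) + ∑ v, (if ρc v = i then κ v u else 0)) :
    ∀ i j, (∑ u, ∑ v, KE u i * M (ρ u) (ρ v) * KE v j) = M i j := by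
  have claimA : ∀ i j, (∑ u, KE u i * M (ρ u) j) = M i j := by
    intro i j
    rcases hcover i with ⟨u0, rfl⟩ | ⟨v0, rfl⟩
    · have hKE' : ∀ u, KE u (ρ u0) = if u = u0 then 1 else 0 := by
        intro u
        rw [hKE]
        have hz : (∑ v, if ρc v = ρ u0 then κ v u else 0) = 0 := by
          refine Finset.sum_eq_zero fun v _ => if_neg fun h => hdisj u0 v h.symm
        rw [hz, add_zero]
        by_cases h : u = u0
        · subst h; simp
        · rw [if_neg (fun hh => h (hρ hh)), if_neg h]
      rw [Finset.sum_congr rfl (fun u _ => by rw [hKE' u])]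
      rw [Finset.sum_eq_single u0]
      · simp
      · intro u _ hu; rw [if_neg hu, zero_mul]
      · intro h; exact absurd (Finset.mem_univ u0) h
    · have hKE' : ∀ u, KE u (ρc v0) = κ v0 u := by
        intro u
        rw [hKE]
        rw [if_neg (hdisj u v0)]
        rw [Finset.sum_eq_single v0]
        · simp
        · intro v _ hv; exact if_neg fun h => hv (hρc h)
        · intro h; exact absurd (Finset.mem_univ v0) h
      rw [Finset.sum_congr rfl (fun u _ => by rw [hKE' u])]
      exact (hκ v0 j).symm
  intro i j
  have h1 : ∀ v, (∑ u, KE u i * M (ρ u) (ρ v)) = M i (ρ v) := fun v => claimA i (ρ v)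
  calc (∑ u, ∑ v, KE u i * M (ρ u) (ρ v) * KE v j)
      = ∑ v, (∑ u, KE u i * M (ρ u) (ρ v)) * KE v j := by
        rw [Finset.sum_comm]
        exact Finset.sum_congr rfl fun v _ => by rw [Finset.sum_mul]
    _ = ∑ v, M i (ρ v) * KE v j := Finset.sum_congr rfl fun v _ => by rw [h1 v]
    _ = ∑ v, KE v j * M (ρ v) i := Finset.sum_congr rfl fun v _ => by
        rw [mul_comm, hsym i (ρ v)]
    _ = M j i := claimA j i
    _ = M i j := hsym j i

end LinAlg

section Param

variable (m e' a : ℕ)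

/-- Parameter space for the determinantal parametrization. -/
abbrev ParamType := (Fin (e' + 1)) ⊕ (Sym2 (Fin a) ⊕ ((Fin a × Fin (m - a)) ⊕ (Fin e' × Sym2 (Fin m))))

variable {m a}

lemma compl_card {S : Finset (Fin m)} (hS : S.card = a) : Sᶜ.card = m - a := by
  rw [Finset.card_compl, hS, Fintype.card_fin]

/-- The polynomial entries of the matrix `K`. -/
noncomputable def KeffP (S : Finset (Fin m)) (hS : S.card = a) (u : Fin a) (i : Fin m) :
    MvPolynomial (ParamType m e' a) ℂ :=
  (if S.orderEmbOfFin hS u = i then 1 else 0)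
  + ∑ v : Fin (m - a), (if Sᶜ.orderEmbOfFin (compl_card hS) v = i
      then X (.inr (.inr (.inl (u, v)))) else 0)

/-- The polynomial entries of the low-rank symmetric matrix `Kᵀ A K`. -/
noncomputable def gEntryP (S : Finset (Fin m)) (hS : S.card = a) (i j : Fin m) :
    MvPolynomial (ParamType m e' a) ℂ :=
  ∑ u : Fin a, ∑ v : Fin a,
    KeffP e' S hS u i * X (.inr (.inl (Sym2.mk u v))) * KeffP e' S hS v j

lemma gEntryP_symm (S : Finset (Fin m)) (hS : S.card = a) (i j : Fin m) :
    gEntryP e' S hS i j = gEntryP e' S hS j i := by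
  unfold gEntryP
  rw [Finset.sum_comm]
  refine Finset.sum_congr rfl fun u _ => Finset.sum_congr rfl fun v _ => ?_
  rw [show (Sym2.mk v u : Sym2 (Fin a)) = Sym2.mk u v from Sym2.eq_swap]
  ring

/-- The polynomial entries indexed by `Sym2`. -/
noncomputable def gQP (S : Finset (Fin m)) (hS : S.card = a) :
    Sym2 (Fin m) → MvPolynomial (ParamType m e' a) ℂ :=
  Sym2.lift ⟨fun i j => gEntryP e' S hS i j, fun i j => gEntryP_symm e' S hS i j⟩

/-- The polynomial family giving the parametrization of the component `(t, S)` of the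
low tuple-rank locus. -/
noncomputable def gFamP (t : Fin (e' + 1)) (S : Finset (Fin m)) (hS : S.card = a) :
    (Fin (e' + 1) × Sym2 (Fin m)) → MvPolynomial (ParamType m e' a) ℂ := fun sq =>
  if sq.1 = t then
    gQP e' S hS sq.2 - ∑ s' : Fin e', X (.inl (t.succAbove s')) * X (.inr (.inr (.inr (s', sq.2))))
  else
    ∑ s' : Fin e', if t.succAbove s' = sq.1 then X (.inr (.inr (.inr (s', sq.2)))) else 0

variable {e'}

/-- Coverage: any point of the low tuple-rank locus is in the image of one of the
parametrizations. -/
lemma coverage (ham2 : a + 2 ≤ m)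
    (φ : Fin (e' + 1) × Sym2 (Fin m) → ℂ) (c : Fin (e' + 1) → ℂ) (hc : c ≠ 0)
    (hrank : (Matrix.of fun i j : Fin m =>
      ∑ t : Fin (e' + 1), c t * φ (t, Sym2.mk i j)).rank ≤ a) :
    ∃ (t : Fin (e' + 1)) (S : Finset (Fin m)) (hS : S.card = a)
      (ξ : ParamType m e' a → ℂ), ∀ s, φ s = eval ξ (gFamP e' t S hS s) := by
  classical
  obtain ⟨t, ht⟩ := Function.ne_iff.1 hc
  have htc : c t ≠ 0 := by simpa using ht
  set M0 : Matrix (Fin m) (Fin m) ℂ :=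
    Matrix.of fun i j : Fin m => ∑ s : Fin (e' + 1), c s * φ (s, Sym2.mk i j) with hM0
  have hM0sym : ∀ i j, M0 i j = M0 j i := by
    intro i j
    simp only [hM0, Matrix.of_apply]
    rw [show (Sym2.mk i j : Sym2 (Fin m)) = Sym2.mk j i from Sym2.eq_swap]
  obtain ⟨S, hS, hspan0⟩ := rows_span_exists M0 hrank (by omega)
  set ρ := S.orderEmbOfFin hS with hρdef
  set ρc := Sᶜ.orderEmbOfFin (compl_card hS) with hρcdef
  set gm : Matrix (Fin m) (Fin m) ℂ := Matrix.of fun i j => (c t)⁻¹ * M0 i j with hgm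
  have hgmsym : ∀ i j, gm i j = gm j i := fun i j => by
    simp only [hgm, Matrix.of_apply]; rw [hM0sym i j]
  -- coefficients
  have hmem : ∀ v : Fin (m - a), M0 (ρc v) ∈
      Submodule.span ℂ (Set.range fun u : Fin a => M0 (ρ u)) := by
    intro v
    have h1 : (M0 '' ↑S) = Set.range fun u : Fin a => M0 (ρ u) := by
      rw [← Finset.range_orderEmbOfFin S hS]
      exact (Set.range_comp _ _).symm
    rw [← h1]
    exact hspan0 (ρc v)
  set κ : Fin (m - a) → Fin a → ℂ :=
    fun v => ((Submodule.mem_span_range_iff_exists_fun ℂ).1 (hmem v)).choose with hκdef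
  have hκ0 : ∀ v j, M0 (ρc v) j = ∑ u, κ v u * M0 (ρ u) j := by
    intro v j
    have := ((Submodule.mem_span_range_iff_exists_fun ℂ).1 (hmem v)).choose_spec
    have h2 := congrFun this j
    rw [Finset.sum_apply] at h2
    simpa [smul_eq_mul] using h2.symm
  have hκ : ∀ v j, gm (ρc v) j = ∑ u, κ v u * gm (ρ u) j := by
    intro v j
    simp only [hgm, Matrix.of_apply]
    rw [hκ0 v j, Finset.mul_sum]
    exact Finset.sum_congr rfl fun u _ => by ring
  -- the evaluation point
  set ξ : ParamType m e' a → ℂ :=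
    Sum.elim (fun s => (c t)⁻¹ * c s)
      (Sum.elim (Sym2.lift ⟨fun u v => gm (ρ u) (ρ v),
          fun u v => hgmsym (ρ u) (ρ v)⟩)
        (Sum.elim (fun p => κ p.2 p.1) (fun p => φ (t.succAbove p.1, p.2)))) with hξ
  -- evaluation of the K polynomials
  set KE : Fin a → Fin m → ℂ := fun u i => eval ξ (KeffP e' S hS u i) with hKEdef
  have hKE : ∀ u i, KE u i = (if ρ u = i then 1 else 0)
      + ∑ v, (if ρc v = i then κ v u else 0) := by
    intro u i
    simp only [hKEdef, KeffP, map_add, map_sum, apply_ite (eval ξ), map_one, map_zero, eval_X]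
    rfl
  -- injectivity and covering facts
  have hρinj : Function.Injective ρ := (S.orderEmbOfFin hS).injective
  have hρcinj : Function.Injective ρc := (Sᶜ.orderEmbOfFin (compl_card hS)).injective
  have hρS : ∀ u, ρ u ∈ S := by
    intro u
    have : ρ u ∈ Set.range ρ := Set.mem_range_self u
    rwa [hρdef, Finset.range_orderEmbOfFin, Finset.mem_coe] at this
  have hρcS : ∀ v, ρc v ∈ Sᶜ := by
    intro v
    have : ρc v ∈ Set.range ρc := Set.mem_range_self v
    rwa [hρcdef, Finset.range_orderEmbOfFin, Finset.mem_coe] at this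
  have hdisj : ∀ u v, ρ u ≠ ρc v := by
    intro u v h
    exact (Finset.mem_compl.1 (hρcS v)) (h ▸ hρS u)
  have hcover : ∀ i, (∃ u, ρ u = i) ∨ (∃ v, ρc v = i) := by
    intro i
    by_cases h : i ∈ S
    · left
      have : i ∈ Set.range ρ := by rw [hρdef, Finset.range_orderEmbOfFin]; exact h
      exact this
    · right
      have : i ∈ Set.range ρc := by
        rw [hρcdef, Finset.range_orderEmbOfFin]
        exact Finset.mem_coe.2 (Finset.mem_compl.2 h)
      exact this
  -- the matrix identity
  have hmat : ∀ i j, eval ξ (gEntryP e' S hS i j) = gm i j := by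
    intro i j
    have h1 : eval ξ (gEntryP e' S hS i j)
        = ∑ u : Fin a, ∑ v : Fin a, KE u i * gm (ρ u) (ρ v) * KE v j := by
      simp only [gEntryP, map_sum, map_mul, eval_X]
      refine Finset.sum_congr rfl fun u _ => Finset.sum_congr rfl fun v _ => ?_
      rw [show ξ (.inr (.inl (Sym2.mk u v))) = gm (ρ u) (ρ v) from by
        simp only [hξ, Sum.elim_inr, Sum.elim_inl]; exact Sym2.lift_mk _ u v]
    rw [h1]
    exact KE_identity gm hgmsym ρ ρc hρinj hρcinj hdisj hcover κ hκ KE hKE i j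
  -- conclusion
  refine ⟨t, S, hS, ξ, ?_⟩
  rintro ⟨s, q⟩
  induction q using Sym2.ind with
  | _ i j =>
    by_cases hst : s = t
    · subst hst
      have hunf : gFamP e' s S hS (s, Sym2.mk i j)
          = gQP e' S hS (Sym2.mk i j) - ∑ s' : Fin e',
              X (.inl (s.succAbove s')) * X (.inr (.inr (.inr (s', Sym2.mk i j)))) := by
        simp [gFamP]
      rw [hunf, map_sub, map_sum]
      have hgq : eval ξ (gQP e' S hS (Sym2.mk i j)) = gm i j := by
        rw [show gQP e' S hS (Sym2.mk i j) = gEntryP e' S hS i j from Sym2.lift_mk _ i j]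
        exact hmat i j
      have hsum : ∀ s' : Fin e',
          eval ξ (X (.inl (s.succAbove s')) * X (.inr (.inr (.inr (s', Sym2.mk i j)))) :
            MvPolynomial (ParamType m e' a) ℂ)
          = ((c s)⁻¹ * c (s.succAbove s')) * φ (s.succAbove s', Sym2.mk i j) := by
        intro s'
        rw [map_mul, eval_X, eval_X]
        rfl
      rw [hgq, Finset.sum_congr rfl fun s' _ => hsum s']
      have hgmval : gm i j = ∑ u : Fin (e' + 1), (c s)⁻¹ * c u * φ (u, Sym2.mk i j) := by
        simp only [hgm, hM0, Matrix.of_apply]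
        rw [Finset.mul_sum]
        exact Finset.sum_congr rfl fun u _ => by ring
      rw [hgmval, Fin.sum_univ_succAbove (fun u => (c s)⁻¹ * c u * φ (u, Sym2.mk i j)) s]
      rw [inv_mul_cancel₀ htc, one_mul]
      ring
    · have hunf : gFamP e' t S hS (s, Sym2.mk i j)
          = ∑ s' : Fin e', if t.succAbove s' = s
              then X (.inr (.inr (.inr (s', Sym2.mk i j)))) else 0 := by
        simp [gFamP, hst]
      obtain ⟨s'0, hs'0⟩ := Fin.exists_succAbove_eq hst
      rw [hunf, map_sum]
      have : ∀ s' : Fin e',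
          eval ξ ((if t.succAbove s' = s
            then X (.inr (.inr (.inr (s', Sym2.mk i j))))
            else 0) : MvPolynomial (ParamType m e' a) ℂ)
          = if t.succAbove s' = s then φ (t.succAbove s', Sym2.mk i j) else 0 := by
        intro s'
        rw [apply_ite (eval ξ), eval_X, map_zero]
        rfl
      rw [Finset.sum_congr rfl fun s' _ => this s']
      rw [Finset.sum_eq_single s'0]
      · rw [if_pos hs'0, hs'0]
      · intro s' _ hne
        rw [if_neg]
        intro h
        exact hne (Fin.succAbove_right_injective (hs'0 ▸ h))
      · intro h; exact absurd (Finset.mem_univ s'0) h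

end Param

section Wrapper

open Order

lemma aeval_eq_eval_complex {τ : Type*} (ξ : τ → ℂ) (y : MvPolynomial τ ℂ) :
    MvPolynomial.aeval (R := ℂ) ξ y = MvPolynomial.eval ξ y :=
  congrFun (congrArg DFunLike.coe (MvPolynomial.coe_aeval_eq_eval ξ)) y

lemma main_wrapper {m e a : ℕ} {J τ : Type*} [Fintype J] [Fintype τ]
    (g : J → (Fin e × Sym2 (Fin m)) → MvPolynomial τ ℂ)
    (hcard : Fintype.card τ + (m - a) * (m - a - 1) / 2 ≤ e * (m * (m + 1) / 2) + e - 1)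
    (hcov : ∀ φ : Fin e × Sym2 (Fin m) → ℂ,
      (∃ c : Fin e → ℂ, c ≠ 0 ∧
        (Matrix.of fun i j : Fin m =>
          ∑ t : Fin e, c t * φ (t, Sym2.mk i j)).rank ≤ a) →
      ∃ j, ∃ ξ : τ → ℂ, ∀ s, φ s = MvPolynomial.eval ξ (g j s)) :
    ∃ I : Ideal (MvPolynomial (Fin e × Sym2 (Fin m)) ℂ),
      (∀ φ : Fin e × Sym2 (Fin m) → ℂ,
        (∃ c : Fin e → ℂ, c ≠ 0 ∧
          (Matrix.of fun i j : Fin m =>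
            ∑ t : Fin e, c t * φ (t, Sym2.mk i j)).rank ≤ a) →
        ∀ p ∈ I, MvPolynomial.eval φ p = 0) ∧
      ringKrullDim (MvPolynomial (Fin e × Sym2 (Fin m)) ℂ ⧸ I) +
          (((m - a) * (m - a - 1) / 2 : ℕ) : WithBot ℕ∞) ≤
        ((e * (m * (m + 1) / 2) + e - 1 : ℕ) : WithBot ℕ∞) := by
  refine ⟨⨅ j, RingHom.ker (MvPolynomial.aeval (R := ℂ) (g j)).toRingHom, ?_, ?_⟩
  · intro φ hφ p hp
    obtain ⟨j, ξ, hξ⟩ := hcov φ hφ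
    have hpj : (MvPolynomial.aeval (R := ℂ) (g j)) p = 0 := by
      have := (iInf_le (fun j => RingHom.ker
        (MvPolynomial.aeval (R := ℂ) (g j)).toRingHom) j) hp
      exact RingHom.mem_ker.1 this
    have hEq : (MvPolynomial.aeval (R := ℂ) φ)
        = ((MvPolynomial.aeval (R := ℂ) ξ).comp (MvPolynomial.aeval (R := ℂ) (g j))) := by
      apply MvPolynomial.algHom_ext
      intro s
      simp only [AlgHom.coe_comp, Function.comp_apply, MvPolynomial.aeval_X]
      rw [aeval_eq_eval_complex, ← hξ s]
    have h2 : MvPolynomial.eval φ p = MvPolynomial.aeval (R := ℂ) φ p :=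
      (aeval_eq_eval_complex φ p).symm
    rw [h2, hEq]
    simp only [AlgHom.coe_comp, Function.comp_apply]
    rw [hpj, map_zero]
  · have h1 := ringKrullDim_quot_inf_ker_le g
    set D := (m - a) * (m - a - 1) / 2 with hD
    calc ringKrullDim _ + ((D : ℕ) : WithBot ℕ∞)
        ≤ ((Fintype.card τ : ℕ) : WithBot ℕ∞) + ((D : ℕ) : WithBot ℕ∞) := by
          exact add_le_add_left h1 _
      _ = (((Fintype.card τ + D : ℕ)) : WithBot ℕ∞) := by
          rw [Nat.cast_add]
      _ ≤ ((e * (m * (m + 1) / 2) + e - 1 : ℕ) : WithBot ℕ∞) := by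
          exact_mod_cast hcard

end Wrapper

/-- Lemma 2.1 -/
theorem tuple_rank_le_locus_codim (m e a : ℕ) (he : 1 ≤ e) :
    ∃ I : Ideal (MvPolynomial (Fin e × Sym2 (Fin m)) ℂ),
      (∀ φ : Fin e × Sym2 (Fin m) → ℂ,
        (∃ c : Fin e → ℂ, c ≠ 0 ∧
          (Matrix.of fun i j : Fin m =>
            ∑ t : Fin e, c t * φ (t, Sym2.mk i j)).rank ≤ a) →
        ∀ p ∈ I, MvPolynomial.eval φ p = 0) ∧
      ringKrullDim (MvPolynomial (Fin e × Sym2 (Fin m)) ℂ ⧸ I) +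
          (((m - a) * (m - a - 1) / 2 : ℕ) : WithBot ℕ∞) ≤
        ((e * (m * (m + 1) / 2) + e - 1 : ℕ) : WithBot ℕ∞) := by
  classical
  obtain ⟨SN, hSN⟩ : ∃ SN, m * (m + 1) = 2 * SN := by
    obtain ⟨r, hr⟩ := Nat.even_mul_succ_self m
    exact ⟨r, by omega⟩
  have hsym_m : Fintype.card (Sym2 (Fin m)) = SN := by
    rw [Sym2.card, Fintype.card_fin, Nat.choose_two_right,
      show (m + 1) * (m + 1 - 1) = 2 * SN from by rw [Nat.add_sub_cancel, ← hSN]; ring]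
    omega
  by_cases hcase : (m - a) * (m - a - 1) / 2 ≤ e - 1
  · -- degenerate case: the trivial parametrization by the identity map
    refine main_wrapper (J := PUnit.{1}) (τ := Fin e × Sym2 (Fin m))
      (g := fun _ => MvPolynomial.X) ?_ ?_
    · rw [Fintype.card_prod, Fintype.card_fin, hsym_m]
      have hSN2 : m * (m + 1) / 2 = SN := by omega
      rw [hSN2]
      omega
    · intro φ _
      exact ⟨PUnit.unit, φ, fun s => by rw [MvPolynomial.eval_X]⟩
  · -- main case
    push_neg at hcase
    have hD1 : 1 ≤ (m - a) * (m - a - 1) / 2 := by omega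
    have ham2 : a + 2 ≤ m := by
      by_contra hcon
      have h1 : m - a ≤ 1 := by omega
      have h0 : (m - a) * (m - a - 1) = 0 := by
        rcases (by omega : m - a = 0 ∨ m - a = 1) with h | h <;> rw [h]
      omega
    obtain ⟨e', rfl⟩ : ∃ e', e = e' + 1 := ⟨e - 1, by omega⟩
    obtain ⟨SA, hSA⟩ : ∃ SA, a * (a + 1) = 2 * SA := by
      obtain ⟨r, hr⟩ := Nat.even_mul_succ_self a
      exact ⟨r, by omega⟩
    obtain ⟨SK, hSK⟩ : ∃ SK, (m - a) * (m - a - 1) = 2 * SK := by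
      obtain ⟨r, hr⟩ := Nat.even_mul_succ_self (m - a - 1)
      have h4 : (m - a - 1) + 1 = m - a := by omega
      rw [h4] at hr
      exact ⟨r, by rw [Nat.mul_comm]; omega⟩
    have hsym_a : Fintype.card (Sym2 (Fin a)) = SA := by
      rw [Sym2.card, Fintype.card_fin, Nat.choose_two_right,
        show (a + 1) * (a + 1 - 1) = 2 * SA from by rw [Nat.add_sub_cancel, ← hSA]; ring]
      omega
    refine main_wrapper (J := Fin (e' + 1) × {S : Finset (Fin m) // S.card = a})
      (τ := ParamType m e' a)
      (g := fun j => gFamP e' j.1 j.2.1 j.2.2) ?_ ?_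
    · -- cardinality bound
      have hPcard : Fintype.card (ParamType m e' a)
          = (e' + 1) + (SA + (a * (m - a) + e' * SN)) := by
        simp [Fintype.card_sum, Fintype.card_prod, hsym_a, hsym_m]
      rw [hPcard]
      have hid : m * (m + 1) = a * (a + 1) + (m - a) * (m - a - 1)
          + 2 * (a * (m - a)) + 2 * (m - a) := by
        obtain ⟨k', hk'⟩ : ∃ k', m = a + (k' + 2) := ⟨m - a - 2, by omega⟩
        have h1 : m - a = k' + 2 := by omega
        have h2 : m - a - 1 = k' + 1 := by omega
        rw [h2, h1, hk']
        ring
      have hid2 : 2 * SN = 2 * SA + 2 * SK + 2 * (a * (m - a)) + 2 * (m - a) := by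
        rw [← hSN, ← hSA, ← hSK]
        exact hid
      have hSN2 : m * (m + 1) / 2 = SN := by omega
      have hSK2 : (m - a) * (m - a - 1) / 2 = SK := by omega
      rw [hSN2, hSK2]
      have hQ : (e' + 1) * SN = e' * SN + SN := by ring
      obtain ⟨t1, ht1⟩ : ∃ t1, a * (m - a) = t1 := ⟨_, rfl⟩
      obtain ⟨P1, hP1⟩ : ∃ P1, e' * SN = P1 := ⟨_, rfl⟩
      obtain ⟨Q1, hQ1⟩ : ∃ Q1, (e' + 1) * SN = Q1 := ⟨_, rfl⟩
      rw [ht1, hP1, hQ1]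
      rw [ht1] at hid2
      rw [hP1, hQ1] at hQ
      omega
    · -- coverage
      rintro φ ⟨c, hc, hrank⟩
      obtain ⟨t, S, hS, ξ, h⟩ := coverage ham2 φ c hc hrank
      exact ⟨(t, ⟨S, hS⟩), ξ, h⟩
end

section
/- Suppose real numbers p_0, p_1, …, p_N > 0, multiplicities μ_0, μ_1, …, μ_N ≥ 0, integers δ_1, …, δ_N ≥ 1, an integer L with 1 ≤ L, and an integer k with 1 ≤ k ≤ N satisfy: μ_0 ≤ 2n for a real n > 0, μ_i ≤ n for all i ≥ 1, δ_i ≥ 2 for 1 ≤ i ≤ L, δ_i = 1 for i > L, p_0 = p_1 + ⋯ + p_k, and the log Noether–Fano inequality p_0μ_0 + Σ_{i=1}^N p_iμ_i > (p_0 + Σ_{i=1}^N p_iδ_i + 1)·n. Then k ≥ L + 1. -/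
/-- Lemma 5.2: in the resolution of a non log canonical singularity, with path
counts `p_0,…,p_N > 0`, multiplicities `μ_0,…,μ_N ≥ 0` satisfying `μ_0 ≤ 2n`
and `μ_i ≤ n` for `i ≥ 1`, discrepancy-type integers `δ_i ≥ 2` for `1 ≤ i ≤ L`
and `δ_i = 1` for `i > L`, `p_0 = p_1 + ⋯ + p_k`, and the log Noether–Fano
inequality `p_0 μ_0 + Σ_{i=1}^N p_i μ_i > (p_0 + Σ_{i=1}^N p_i δ_i + 1)·n`,
one has `k ≥ L + 1`. -/
theorem lemma_5_2 (N L k : ℕ) (n : ℝ) (p μ : ℕ → ℝ) (δ : ℕ → ℕ)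
    (hn : 0 < n)
    (hL1 : 1 ≤ L) (hLN : L ≤ N) (hk1 : 1 ≤ k) (hkN : k ≤ N)
    (hp : ∀ i, i ≤ N → 0 < p i)
    (hμnonneg : ∀ i, i ≤ N → 0 ≤ μ i)
    (hμ0 : μ 0 ≤ 2 * n)
    (hμ : ∀ i, 1 ≤ i → i ≤ N → μ i ≤ n)
    (hδ1 : ∀ i, 1 ≤ i → i ≤ N → 1 ≤ δ i)
    (hδL : ∀ i, 1 ≤ i → i ≤ L → 2 ≤ δ i)
    (hδ : ∀ i, L < i → i ≤ N → δ i = 1)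
    (hp0 : p 0 = ∑ i ∈ Finset.Icc 1 k, p i)
    (hNF : p 0 * μ 0 + ∑ i ∈ Finset.Icc 1 N, p i * μ i >
      (p 0 + (∑ i ∈ Finset.Icc 1 N, p i * (δ i : ℝ)) + 1) * n) :
    L + 1 ≤ k := by
  by_contra h
  push_neg at h
  have hkL : k ≤ L := Nat.lt_succ_iff.mp h
  have hp0pos : 0 < p 0 := hp 0 (Nat.zero_le N)
  -- split sums at L
  have esplit : ∀ f : ℕ → ℝ,
      ∑ i ∈ Finset.Icc 1 L, f i + ∑ i ∈ Finset.Icc (L + 1) N, f i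
        = ∑ i ∈ Finset.Icc 1 N, f i := by
    intro f
    rw [show (1 : ℕ) = 0 + 1 from rfl, Finset.Icc_add_one_left_eq_Ioc, Finset.Icc_add_one_left_eq_Ioc,
      show L + (0 + 1) = L + 1 from rfl, Finset.Icc_add_one_left_eq_Ioc]
    exact Finset.sum_Ioc_consecutive f (Nat.zero_le L) hLN
  -- bound μ-sum
  have hsum1 : ∑ i ∈ Finset.Icc 1 N, p i * μ i ≤ ∑ i ∈ Finset.Icc 1 N, p i * n := by
    refine Finset.sum_le_sum fun i hi => ?_
    simp only [Finset.mem_Icc] at hi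
    exact mul_le_mul_of_nonneg_left (hμ i hi.1 hi.2) (hp i hi.2).le
  -- bound δ-sum from below
  have hsumδ : ∑ i ∈ Finset.Icc 1 L, (p i + p i) + ∑ i ∈ Finset.Icc (L + 1) N, p i
      ≤ ∑ i ∈ Finset.Icc 1 N, p i * (δ i : ℝ) := by
    rw [← esplit (fun i => p i * (δ i : ℝ))]
    refine add_le_add (Finset.sum_le_sum fun i hi => ?_)
      (Finset.sum_le_sum fun i hi => ?_)
    · simp only [Finset.mem_Icc] at hi
      have h2 : (2 : ℝ) ≤ (δ i : ℝ) := by exact_mod_cast hδL i hi.1 hi.2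
      nlinarith [hp i (hi.2.trans hLN)]
    · simp only [Finset.mem_Icc] at hi
      rw [hδ i (by omega) hi.2]
      simp
  -- p 0 ≤ sum over Icc 1 L
  have hp0le : p 0 ≤ ∑ i ∈ Finset.Icc 1 L, p i := by
    rw [hp0]
    refine Finset.sum_le_sum_of_subset_of_nonneg
      (Finset.Icc_subset_Icc_right hkL) fun i hi _ => ?_
    simp only [Finset.mem_Icc] at hi
    exact (hp i (hi.2.trans hLN)).le
  have hptot : ∑ i ∈ Finset.Icc 1 L, p i + ∑ i ∈ Finset.Icc (L + 1) N, p i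
      = ∑ i ∈ Finset.Icc 1 N, p i := esplit p
  have hμ0' : p 0 * μ 0 ≤ p 0 * (2 * n) :=
    mul_le_mul_of_nonneg_left hμ0 hp0pos.le
  have hsum1' : ∑ i ∈ Finset.Icc 1 N, p i * n = (∑ i ∈ Finset.Icc 1 N, p i) * n := by
    rw [Finset.sum_mul]
  have hsumL : ∑ i ∈ Finset.Icc 1 L, (p i + p i) = 2 * ∑ i ∈ Finset.Icc 1 L, p i := by
    rw [Finset.mul_sum]; exact Finset.sum_congr rfl fun i _ => by ring
  rw [hsumL] at hsumδ
  nlinarith [hNF, hμ0', hsum1, hsumδ, hp0le, hptot, hsum1', hn]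
end
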